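/- For every integer n ≥ 9, the edge irregularity strength of the cycle-star graph CS_{6,n−6} equals n − 4. -/

import Mathlib

/-- The weight of an edge under a vertex labeling `φ`: the sum of the labels
of its two endpoints. -/
def edgeWeight {V : Type*} (φ : V → ℕ) : Sym2 V → ℕ :=
  Sym2.lift ⟨fun u v => φ u + φ v, fun u v => Nat.add_comm _ _⟩

/-- `φ` is an edge irregular `k`-labeling of `G`: it is a vertex labeling with
labels in `{1, …, k}` such that distinct edges get distinct weights. -/
def IsEdgeIrregularLabeling {V : Type*} (G : SimpleGraph V) (k : ℕ) (φ : V → ℕ) : Prop :=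
  (∀ v, φ v ∈ Finset.Icc 1 k) ∧ Set.InjOn (edgeWeight φ) G.edgeSet

/-- The edge irregularity strength of `G`: the least `k` for which `G` admits
an edge irregular `k`-labeling. -/
noncomputable def edgeIrregularityStrength {V : Type*} (G : SimpleGraph V) : ℕ :=
  sInf {k | ∃ φ : V → ℕ, IsEdgeIrregularLabeling G k φ}

/-- The cycle-star graph `CS_{k, n-k}` on `n` vertices: vertices `0, …, k-1`
form a cycle of length `k`, and the remaining `n - k` vertices are pendant
leaves all attached to vertex `0` of the cycle. -/
def cycleStar (k n : ℕ) : SimpleGraph (Fin n) :=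
  SimpleGraph.fromRel (fun i j =>
    (i.val < k ∧ j.val < k ∧ j.val = (i.val + 1) % k) ∨ (i.val = 0 ∧ k ≤ j.val))

def lab (n : ℕ) (i : Fin n) : ℕ :=
  if i.val = 0 then n - 4
  else if i.val ≤ 2 then 1
  else if i.val ≤ 4 then 2
  else if i.val = 5 then 3
  else if i.val = 6 then 2
  else i.val - 3

def inv2 (n w : ℕ) : ℕ × ℕ :=
  if w = 2 then (1, 2)
  else if w = 3 then (2, 3)
  else if w = 4 then (3, 4)
  else if w = 5 then (4, 5)
  else if w = n - 3 then (0, 1)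
  else if w = n - 2 then (0, 6)
  else if w = n - 1 then (0, 5)
  else (0, w + 7 - n)

def psi (n : ℕ) (hp : 0 < n) (w : ℕ) : Sym2 (Fin n) :=
  Sym2.mk ⟨(inv2 n w).1 % n, Nat.mod_lt _ hp⟩ ⟨(inv2 n w).2 % n, Nat.mod_lt _ hp⟩

lemma psi_eval {n : ℕ} (hp : 0 < n) {w p q : ℕ} (h : inv2 n w = (p, q))
    (hp' : p < n) (hq' : q < n) :
    psi n hp w = Sym2.mk (⟨p, hp'⟩ : Fin n) (⟨q, hq'⟩ : Fin n) := by
  simp [psi, h, Nat.mod_eq_of_lt hp', Nat.mod_eq_of_lt hq']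

lemma psi_lab {n : ℕ} (hn : 9 ≤ n) (a b : Fin n)
    (h : (a.val < 6 ∧ b.val < 6 ∧ b.val = (a.val + 1) % 6) ∨ (a.val = 0 ∧ 6 ≤ b.val)) :
    psi n (by omega) (lab n a + lab n b) = Sym2.mk a b := by
  have hb' := b.isLt
  rcases h with ⟨h1, h2, h3⟩ | ⟨h1, h2⟩
  · have hc : (a.val = 0 ∧ b.val = 1) ∨ (a.val = 1 ∧ b.val = 2) ∨ (a.val = 2 ∧ b.val = 3)
        ∨ (a.val = 3 ∧ b.val = 4) ∨ (a.val = 4 ∧ b.val = 5) ∨ (a.val = 5 ∧ b.val = 0) := by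
      omega
    rcases hc with ⟨ha, hb⟩ | ⟨ha, hb⟩ | ⟨ha, hb⟩ | ⟨ha, hb⟩ | ⟨ha, hb⟩ | ⟨ha, hb⟩
    · have hw : lab n a + lab n b = n - 3 := by simp [lab, ha, hb]; omega
      have hinv : inv2 n (n - 3) = (0, 1) := by
        unfold inv2
        rw [if_neg (show ¬n - 3 = 2 by omega), if_neg (show ¬n - 3 = 3 by omega),
          if_neg (show ¬n - 3 = 4 by omega), if_neg (show ¬n - 3 = 5 by omega), if_pos rfl]
      rw [hw, psi_eval (by omega) hinv (by omega) (by omega), Sym2.eq_iff]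
      left; exact ⟨Fin.ext (by simp [ha]), Fin.ext (by simp [hb])⟩
    · have hw : lab n a + lab n b = 2 := by simp [lab, ha, hb]
      have hinv : inv2 n 2 = (1, 2) := by unfold inv2; rw [if_pos rfl]
      rw [hw, psi_eval (by omega) hinv (by omega) (by omega), Sym2.eq_iff]
      left; exact ⟨Fin.ext (by simp [ha]), Fin.ext (by simp [hb])⟩
    · have hw : lab n a + lab n b = 3 := by simp [lab, ha, hb]
      have hinv : inv2 n 3 = (2, 3) := by
        unfold inv2; rw [if_neg (show ¬(3:ℕ) = 2 by omega), if_pos rfl]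
      rw [hw, psi_eval (by omega) hinv (by omega) (by omega), Sym2.eq_iff]
      left; exact ⟨Fin.ext (by simp [ha]), Fin.ext (by simp [hb])⟩
    · have hw : lab n a + lab n b = 4 := by simp [lab, ha, hb]
      have hinv : inv2 n 4 = (3, 4) := by
        unfold inv2
        rw [if_neg (show ¬(4:ℕ) = 2 by omega), if_neg (show ¬(4:ℕ) = 3 by omega), if_pos rfl]
      rw [hw, psi_eval (by omega) hinv (by omega) (by omega), Sym2.eq_iff]
      left; exact ⟨Fin.ext (by simp [ha]), Fin.ext (by simp [hb])⟩
    · have hw : lab n a + lab n b = 5 := by simp [lab, ha, hb]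
      have hinv : inv2 n 5 = (4, 5) := by
        unfold inv2
        rw [if_neg (show ¬(5:ℕ) = 2 by omega), if_neg (show ¬(5:ℕ) = 3 by omega),
          if_neg (show ¬(5:ℕ) = 4 by omega), if_pos rfl]
      rw [hw, psi_eval (by omega) hinv (by omega) (by omega), Sym2.eq_iff]
      left; exact ⟨Fin.ext (by simp [ha]), Fin.ext (by simp [hb])⟩
    · have hw : lab n a + lab n b = n - 1 := by simp [lab, ha, hb]; omega
      have hinv : inv2 n (n - 1) = (0, 5) := by
        unfold inv2
        rw [if_neg (show ¬n - 1 = 2 by omega), if_neg (show ¬n - 1 = 3 by omega),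
          if_neg (show ¬n - 1 = 4 by omega), if_neg (show ¬n - 1 = 5 by omega),
          if_neg (show ¬n - 1 = n - 3 by omega), if_neg (show ¬n - 1 = n - 2 by omega),
          if_pos rfl]
      rw [hw, psi_eval (by omega) hinv (by omega) (by omega), Sym2.eq_iff]
      right; exact ⟨Fin.ext (by simp [hb]), Fin.ext (by simp [ha])⟩
  · by_cases h6 : b.val = 6
    · have hw : lab n a + lab n b = n - 2 := by simp [lab, h1, h6]; omega
      have hinv : inv2 n (n - 2) = (0, 6) := by
        unfold inv2
        rw [if_neg (show ¬n - 2 = 2 by omega), if_neg (show ¬n - 2 = 3 by omega),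
          if_neg (show ¬n - 2 = 4 by omega), if_neg (show ¬n - 2 = 5 by omega),
          if_neg (show ¬n - 2 = n - 3 by omega), if_pos rfl]
      rw [hw, psi_eval (by omega) hinv (by omega) (by omega), Sym2.eq_iff]
      left; exact ⟨Fin.ext (by simp [h1]), Fin.ext (by simp [h6])⟩
    · have h7 : 7 ≤ b.val := by omega
      have hw : lab n a + lab n b = n - 4 + (b.val - 3) := by
        unfold lab
        rw [if_pos h1, if_neg (by omega : ¬ b.val = 0), if_neg (by omega : ¬ b.val ≤ 2),
          if_neg (by omega : ¬ b.val ≤ 4), if_neg (by omega : ¬ b.val = 5),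
          if_neg (by omega : ¬ b.val = 6)]
      have hinv : inv2 n (n - 4 + (b.val - 3)) = (0, b.val) := by
        unfold inv2
        rw [if_neg (show ¬n - 4 + (b.val - 3) = 2 by omega),
          if_neg (show ¬n - 4 + (b.val - 3) = 3 by omega),
          if_neg (show ¬n - 4 + (b.val - 3) = 4 by omega),
          if_neg (show ¬n - 4 + (b.val - 3) = 5 by omega),
          if_neg (show ¬n - 4 + (b.val - 3) = n - 3 by omega),
          if_neg (show ¬n - 4 + (b.val - 3) = n - 2 by omega),
          if_neg (show ¬n - 4 + (b.val - 3) = n - 1 by omega)]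
        simp only [Prod.mk.injEq, true_and]
        omega
      rw [hw, psi_eval (by omega) hinv (by omega) hb', Sym2.eq_iff]
      left; exact ⟨Fin.ext (by simp [h1]), Fin.ext rfl⟩

lemma psi_adj {n : ℕ} (hn : 9 ≤ n) (a b : Fin n) (h : (cycleStar 6 n).Adj a b) :
    psi n (by omega) (lab n a + lab n b) = Sym2.mk a b := by
  simp only [cycleStar, SimpleGraph.fromRel_adj] at h
  obtain ⟨hne, h | h⟩ := h
  · exact psi_lab hn a b h
  · rw [Nat.add_comm, Sym2.eq_swap]
    exact psi_lab hn b a h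

def gfun (n : ℕ) (i : Fin (n - 4)) : Fin n :=
  ⟨if i.val = 0 then 1 else if i.val = 1 then 5 else i.val + 4, by
    have := i.isLt; split_ifs <;> omega⟩

lemma gfun_val (n : ℕ) (i : Fin (n - 4)) :
    (gfun n i).val = if i.val = 0 then 1 else if i.val = 1 then 5 else i.val + 4 := rfl

lemma gfun_inj (n : ℕ) : Function.Injective (gfun n) := by
  intro i j h
  have h' := congrArg Fin.val h
  rw [gfun_val, gfun_val] at h'
  have hi := i.isLt; have hj := j.isLt
  apply Fin.ext
  split_ifs at h' <;> omega

lemma gfun_adj (n : ℕ) (hn : 9 ≤ n) (z : Fin n) (hz : z.val = 0) (i : Fin (n - 4)) :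
    (cycleStar 6 n).Adj z (gfun n i) := by
  have hi := i.isLt
  have hv : (gfun n i).val = 1 ∨ (gfun n i).val = 5 ∨ 6 ≤ (gfun n i).val := by
    rw [gfun_val]; split_ifs <;> omega
  simp only [cycleStar, SimpleGraph.fromRel_adj]
  constructor
  · intro h
    rw [Fin.ext_iff, hz] at h
    omega
  · rcases hv with h | h | h
    · exact Or.inl (Or.inl ⟨by omega, by omega, by omega⟩)
    · exact Or.inr (Or.inl ⟨by omega, by omega, by omega⟩)
    · exact Or.inl (Or.inr ⟨hz, h⟩)

theorem es_cycleStar_six (n : ℕ) (hn : 9 ≤ n) :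
    edgeIrregularityStrength (cycleStar 6 n) = n - 4 := by
  have hupper : IsEdgeIrregularLabeling (cycleStar 6 n) (n - 4) (lab n) := by
    constructor
    · intro v
      have := v.isLt
      rw [Finset.mem_Icc]
      unfold lab
      split_ifs <;> omega
    · intro e he f hf hw
      have key : ∀ g, g ∈ (cycleStar 6 n).edgeSet →
          psi n (by omega) (edgeWeight (lab n) g) = g := by
        intro g
        induction g using Sym2.ind with
        | _ a b =>
          intro hg
          rw [SimpleGraph.mem_edgeSet] at hg
          have := psi_adj hn a b hg
          simpa [edgeWeight] using this
      rw [← key e he, ← key f hf, hw]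
  unfold edgeIrregularityStrength
  have hne : {k | ∃ φ : Fin n → ℕ, IsEdgeIrregularLabeling (cycleStar 6 n) k φ}.Nonempty :=
    ⟨n - 4, lab n, hupper⟩
  have hlow : ∀ k ∈ {k | ∃ φ : Fin n → ℕ, IsEdgeIrregularLabeling (cycleStar 6 n) k φ},
      n - 4 ≤ k := by
    rintro k ⟨φ, hmem, hinj⟩
    have hφinj : Function.Injective fun i : Fin (n - 4) => φ (gfun n i) := by
      intro i j h
      have h' : φ (gfun n i) = φ (gfun n j) := h
      have e1 := (cycleStar 6 n).mem_edgeSet.mpr (gfun_adj n hn ⟨0, by omega⟩ rfl i)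
      have e2 := (cycleStar 6 n).mem_edgeSet.mpr (gfun_adj n hn ⟨0, by omega⟩ rfl j)
      have hweq : edgeWeight φ (Sym2.mk (⟨0, by omega⟩ : Fin n) (gfun n i))
          = edgeWeight φ (Sym2.mk (⟨0, by omega⟩ : Fin n) (gfun n j)) := by
        simp only [edgeWeight, Sym2.lift_mk]
        rw [h']
      have heq := hinj e1 e2 hweq
      rw [Sym2.eq_iff] at heq
      apply gfun_inj n
      rcases heq with ⟨-, h2⟩ | ⟨hA, hB⟩
      · exact h2
      · exact hB.trans hA
    have hcard := Finset.card_le_card_of_injOn (s := (Finset.univ : Finset (Fin (n - 4))))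
      (t := Finset.Icc 1 k) (fun i : Fin (n - 4) => φ (gfun n i))
      (fun i _ => hmem (gfun n i)) (hφinj.injOn)
    simp [Nat.card_Icc] at hcard
    omega
  exact le_antisymm (Nat.sInf_le ⟨lab n, hupper⟩) (le_csInf hne hlow)
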